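/- Let K be an algebraically closed field, n ≥ 1, and let u ∈ GL_n(K) be unipotent (i.e. u − 1 is nilpotent). If z belongs to the center of the centralizer C = {g ∈ GL_n(K) : gu = ug}, i.e. z ∈ C and z commutes with every element of C, then z has a single eigenvalue: there exists c ∈ Kˣ such that z − c·1 is nilpotent (equivalently, the semisimple part of z is a scalar matrix). -/

import Mathlib

open Matrix Polynomial

section Aux

variable {K : Type*} [Field K] {n : ℕ}

private lemma eig_iff_det (z : Matrix (Fin n) (Fin n) K) (μ : K) :
    (∃ v, v ≠ 0 ∧ z *ᵥ v = μ • v) ↔ (z - μ • 1).det = 0 := by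
  rw [← Matrix.exists_mulVec_eq_zero_iff]
  have h : ∀ v : Fin n → K, (z - μ • (1 : Matrix (Fin n) (Fin n) K)) *ᵥ v = z *ᵥ v - μ • v := by
    intro v
    rw [Matrix.sub_mulVec, Matrix.smul_mulVec, Matrix.one_mulVec]
  constructor
  · rintro ⟨v, hv, hzv⟩; exact ⟨v, hv, by rw [h, hzv, sub_self]⟩
  · rintro ⟨v, hv, hzv⟩
    refine ⟨v, hv, ?_⟩
    rw [h] at hzv
    exact sub_eq_zero.mp hzv

private lemma eval_charpoly' (M : Matrix (Fin n) (Fin n) K) (μ : K) :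
    M.charpoly.eval μ = (μ • (1 : Matrix (Fin n) (Fin n) K) - M).det := by
  rw [Matrix.charpoly, ← Polynomial.coe_evalRingHom, RingHom.map_det]
  congr 1
  ext i j
  by_cases h : i = j <;>
    simp [Matrix.charmatrix_apply, Matrix.diagonal_apply, Matrix.one_apply, h]

private lemma exists_fixed_eigvec (u z : Matrix (Fin n) (Fin n) K)
    (hzu : z * u = u * z) (hnil : IsNilpotent (u - 1)) {μ : K} {v : Fin n → K}
    (hv : v ≠ 0) (hzv : z *ᵥ v = μ • v) :
    ∃ w, w ≠ 0 ∧ z *ᵥ w = μ • w ∧ u *ᵥ w = w := by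
  obtain ⟨N, hN⟩ := hnil
  set B := u - 1 with hB
  have hcomm : Commute z B := by
    simp only [Commute, SemiconjBy, hB, mul_sub, sub_mul, hzu, mul_one, one_mul]
  have key : ∀ k, ∀ x : Fin n → K, x ≠ 0 → z *ᵥ x = μ • x → B ^ k *ᵥ x = 0 →
      ∃ w, w ≠ 0 ∧ z *ᵥ w = μ • w ∧ B *ᵥ w = 0 := by
    intro k
    induction k with
    | zero =>
      intro x hx hzx h0
      rw [pow_zero, Matrix.one_mulVec] at h0
      exact absurd h0 hx
    | succ k ih =>
      intro x hx hzx h0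
      by_cases hk : B ^ k *ᵥ x = 0
      · exact ih x hx hzx hk
      · refine ⟨B ^ k *ᵥ x, hk, ?_, ?_⟩
        · rw [Matrix.mulVec_mulVec, (hcomm.pow_right k).eq, ← Matrix.mulVec_mulVec, hzx,
            Matrix.mulVec_smul]
        · rw [Matrix.mulVec_mulVec, ← pow_succ', h0]
  obtain ⟨w, hw, hzw, hBw⟩ := key N v hv hzv (by rw [hN, Matrix.zero_mulVec])
  refine ⟨w, hw, hzw, ?_⟩
  rw [hB, Matrix.sub_mulVec, Matrix.one_mulVec, sub_eq_zero] at hBw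
  exact hBw

private lemma mul_ovf (A : Matrix (Fin n) (Fin n) K) (w f : Fin n → K) :
    A * (Matrix.of fun i j => w i * f j) = Matrix.of fun i j => (A *ᵥ w) i * f j := by
  ext i j
  simp only [Matrix.mul_apply, Matrix.of_apply, Matrix.mulVec, dotProduct,
    Finset.sum_mul]
  exact Finset.sum_congr rfl fun k _ => by ring

private lemma ovf_mul (A : Matrix (Fin n) (Fin n) K) (w f : Fin n → K) :
    (Matrix.of fun i j => w i * f j) * A = Matrix.of fun i j => w i * (Aᵀ *ᵥ f) j := by
  ext i j
  simp only [Matrix.mul_apply, Matrix.of_apply, Matrix.mulVec, dotProduct,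
    Matrix.transpose_apply, Finset.mul_sum]
  exact Finset.sum_congr rfl fun k _ => by ring

end Aux

/-- **Central elements of the centralizer of a unipotent matrix have a single eigenvalue.**
Let `K` be an algebraically closed field and `u ∈ GLₙ(K)` unipotent (`u - 1` nilpotent).
If `z` belongs to the center of the centralizer `C = {g ∈ GLₙ(K) : gu = ug}` — i.e.
`z ∈ C` and `z` commutes with every element of `C` — then `z` has a single eigenvalue:
there is `c ∈ Kˣ` with `z - c·1` nilpotent. -/
theorem stmt_8 {K : Type*} [Field K] [IsAlgClosed K] (n : ℕ) (hn : 1 ≤ n)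
    (u : Matrix (Fin n) (Fin n) K) (hu : IsUnit u) (huni : IsNilpotent (u - 1))
    (z : Matrix (Fin n) (Fin n) K) (hz : IsUnit z) (hzu : z * u = u * z)
    (hcentral : ∀ g : Matrix (Fin n) (Fin n) K, IsUnit g → g * u = u * g → z * g = g * z) :
    ∃ c : K, c ≠ 0 ∧ IsNilpotent (z - c • (1 : Matrix (Fin n) (Fin n) K)) := by
  classical
  have hdet : z.det ≠ 0 := ((Matrix.isUnit_iff_isUnit_det z).mp hz).ne_zero
  have hsplits : z.charpoly.Splits := IsAlgClosed.splits z.charpoly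
  have hdeg : z.charpoly.natDegree = n := by
    rw [Matrix.charpoly_natDegree_eq_dim, Fintype.card_fin]
  have hcard : z.charpoly.roots.card = n := by
    rw [(Polynomial.splits_iff_card_roots).mp hsplits, hdeg]
  have hroots_ne : z.charpoly.roots ≠ 0 := by
    intro h
    rw [h, Multiset.card_zero] at hcard
    omega
  obtain ⟨lam, hlam⟩ := Multiset.exists_mem_of_ne_zero hroots_ne
  have hmemiff : ∀ μ : K, μ ∈ z.charpoly.roots ↔ (∃ v, v ≠ 0 ∧ z *ᵥ v = μ • v) := by
    intro μ
    rw [eig_iff_det, Polynomial.mem_roots (z.charpoly_monic.ne_zero), Polynomial.IsRoot,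
      eval_charpoly']
    constructor
    · intro h
      have h2 : z - μ • (1 : Matrix (Fin n) (Fin n) K) = -(μ • 1 - z) := by
        rw [neg_sub]
      rw [h2, Matrix.det_neg, h, mul_zero]
    · intro h
      have h2 : μ • (1 : Matrix (Fin n) (Fin n) K) - z = -(z - μ • 1) := by
        rw [neg_sub]
      rw [h2, Matrix.det_neg, h, mul_zero]
  by_cases hall : ∀ μ ∈ z.charpoly.roots, μ = lam
  · refine ⟨lam, ?_, ?_⟩
    · intro h0
      obtain ⟨v, hv, hzv⟩ := (hmemiff lam).mp hlam
      rw [h0, zero_smul] at hzv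
      exact hdet (Matrix.exists_mulVec_eq_zero_iff.mp ⟨v, hv, hzv⟩)
    · have hrepl : z.charpoly.roots = Multiset.replicate n lam :=
        Multiset.eq_replicate.mpr ⟨hcard, hall⟩
      have hp : z.charpoly = (X - C lam) ^ n := by
        have h := hsplits.eq_prod_roots_of_monic z.charpoly_monic
        rw [hrepl, Multiset.map_replicate, Multiset.prod_replicate] at h
        exact h
      refine ⟨n, ?_⟩
      have h0 := z.aeval_self_charpoly
      rw [hp, map_pow, map_sub, aeval_X, aeval_C] at h0
      rwa [Algebra.algebraMap_eq_smul_one] at h0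
  · exfalso
    push_neg at hall
    obtain ⟨mu, hmu_mem, hmune⟩ := hall
    obtain ⟨v0, hv0, hzv0⟩ := (hmemiff mu).mp hmu_mem
    obtain ⟨w, hw, hzw, huw⟩ := exists_fixed_eigvec u z hzu huni hv0 hzv0
    have hzuT : zᵀ * uᵀ = uᵀ * zᵀ := by
      rw [← Matrix.transpose_mul, ← Matrix.transpose_mul, hzu]
    have hnilT : IsNilpotent (uᵀ - (1 : Matrix (Fin n) (Fin n) K)) := by
      obtain ⟨N, hN⟩ := huni
      refine ⟨N, ?_⟩
      rw [← Matrix.transpose_one, ← Matrix.transpose_sub, ← Matrix.transpose_pow, hN,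
        Matrix.transpose_zero]
    have hlamT : ∃ f, f ≠ 0 ∧ zᵀ *ᵥ f = lam • f := by
      rw [eig_iff_det]
      have h1 : zᵀ - lam • (1 : Matrix (Fin n) (Fin n) K) = (z - lam • 1)ᵀ := by
        rw [Matrix.transpose_sub, Matrix.transpose_smul, Matrix.transpose_one]
      rw [h1, Matrix.det_transpose, ← eig_iff_det]
      exact (hmemiff lam).mp hlam
    obtain ⟨f0, hf0, hzf0⟩ := hlamT
    obtain ⟨f, hf, hzf, huf⟩ := exists_fixed_eigvec uᵀ zᵀ hzuT hnilT hf0 hzf0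
    set m : Matrix (Fin n) (Fin n) K := Matrix.of fun i j => w i * f j with hm
    -- basic products
    have hum : u * m = m := by rw [hm, mul_ovf, huw]
    have hmu : m * u = m := by rw [hm, ovf_mul, huf]
    have hzm : z * m = mu • m := by
      rw [hm, mul_ovf, hzw]
      ext i j
      simp [mul_assoc]
    have hmz : m * z = lam • m := by
      rw [hm, ovf_mul, hzf]
      ext i j
      simp only [Matrix.of_apply, Matrix.smul_apply, Pi.smul_apply, smul_eq_mul]
      ring
    -- f ⬝ᵥ w = 0
    have hS : f ⬝ᵥ w = 0 := by
      have h1 : f ⬝ᵥ (z *ᵥ w) = mu * (f ⬝ᵥ w) := by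
        rw [hzw, dotProduct_smul, smul_eq_mul]
      have h2 : f ⬝ᵥ (z *ᵥ w) = lam * (f ⬝ᵥ w) := by
        rw [Matrix.dotProduct_mulVec, ← Matrix.mulVec_transpose, hzf, smul_dotProduct,
          smul_eq_mul]
      have := h1.symm.trans h2
      rcases mul_eq_mul_right_iff.mp this with h | h
      · exact absurd h hmune
      · exact h
    have hmm : m * m = 0 := by
      rw [hm, mul_ovf]
      have hmw : (Matrix.of fun i j => w i * f j) *ᵥ w = 0 := by
        ext i
        simp only [Matrix.mulVec, dotProduct, Matrix.of_apply, Pi.zero_apply]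
        calc ∑ k, w i * f k * w k = w i * ∑ k, f k * w k := by
              rw [Finset.mul_sum]; exact Finset.sum_congr rfl fun k _ => by ring
          _ = 0 := by rw [show (∑ k, f k * w k) = f ⬝ᵥ w from rfl, hS, mul_zero]
      rw [hmw]
      ext i j
      simp
    -- m ≠ 0
    have hm_ne : m ≠ 0 := by
      obtain ⟨i, hi⟩ := Function.ne_iff.mp hw
      obtain ⟨j, hj⟩ := Function.ne_iff.mp hf
      intro h
      have h2 := congrFun (congrFun h i) j
      simp only [hm, Matrix.of_apply, Matrix.zero_apply, mul_eq_zero] at h2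
      rcases h2 with h2 | h2
      · exact hi h2
      · exact hj h2
    -- g = 1 + m is a unit commuting with u
    have hgu : IsUnit (1 + m) := by
      refine isUnit_iff_exists.mpr ⟨1 - m, ?_, ?_⟩
      · have he : (1 + m) * (1 - m) = 1 + m - m - m * m := by noncomm_ring
        rw [he, hmm, sub_zero, add_sub_cancel_right]
      · have he : (1 - m) * (1 + m) = 1 + m - m - m * m := by noncomm_ring
        rw [he, hmm, sub_zero, add_sub_cancel_right]
    have hgcomm : (1 + m) * u = u * (1 + m) := by
      rw [add_mul, mul_add, one_mul, mul_one, hum, hmu]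
    have hc := hcentral (1 + m) hgu hgcomm
    rw [mul_add, add_mul, mul_one, one_mul, hzm, hmz, add_right_inj] at hc
    have : (mu - lam) • m = 0 := by rw [sub_smul, hc, sub_self]
    rcases smul_eq_zero.mp this with h | h
    · exact hmune (sub_eq_zero.mp h)
    · exact hm_ne h
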